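/- Let m ≥ 2 be an integer, let Q be a probability mass function on {1,…,m} with Q(1) ≥ Q(2) ≥ … ≥ Q(m) > 0, and let i ∈ {0,…,m−1} be such that Q(i+1) ≤ 2·Q(m). Let S := Σ_{j=i+1}^{m} Q(j) and let Q* be the probability mass function with Q*(j) = Q(j) for j ∈ {1,…,i} and Q*(j) = S/(m−i) for j ∈ {i+1,…,m}. Define v(α) := log((α−1)/(2^α−2)) − (α/(α−1))·log(α/(2^α−1)) for α ∈ (0,1)∪(1,∞), and v(1) := log(2/(e·log 2)). Then for every α > 0, H_α(Q) ≥ H_α(Q*) − v(α). -/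

import Mathlib

open Finset

/-- `P` is a probability mass function, strictly positive on `{1,…,n}`. -/
def IsPMF (n : ℕ) (P : ℕ → ℝ) : Prop :=
  (∀ i ∈ Finset.Icc 1 n, 0 < P i) ∧ ∑ i ∈ Finset.Icc 1 n, P i = 1

/-- The ratio of the maximal to minimal mass of `P` on `{1,…,n}` is at most `ρ`. -/
def RatioBdd (n : ℕ) (ρ : ℝ) (P : ℕ → ℝ) : Prop :=
  ∀ i ∈ Finset.Icc 1 n, ∀ j ∈ Finset.Icc 1 n, P i ≤ ρ * P j

/-- `P` is nonincreasing on `{1,…,n}`. -/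
def DecOn (n : ℕ) (P : ℕ → ℝ) : Prop :=
  ∀ i ∈ Finset.Icc 1 n, ∀ j ∈ Finset.Icc 1 n, i ≤ j → P j ≤ P i

/-- Sum of the `k` largest masses of `P` on `{1,…,n}`. -/
noncomputable def topSum (n : ℕ) (P : ℕ → ℝ) (k : ℕ) : ℝ :=
  sSup ((fun s : Finset ℕ => ∑ i ∈ s, P i) '' {s | s ⊆ Finset.Icc 1 n ∧ s.card = k})

/-- `P ≺ Q`: `P` is majorized by `Q`, both viewed on `{1,…,n}`. -/
def MajorizedBy (n : ℕ) (P Q : ℕ → ℝ) : Prop :=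
  ∀ k, 1 ≤ k → k ≤ n - 1 → topSum n P k ≤ topSum n Q k

/-- Zero-padding of a pmf on `{1,…,m}` outside of `{1,…,m}`. -/
def padTo (m : ℕ) (Q : ℕ → ℝ) : ℕ → ℝ := fun i => if i ≤ m then Q i else 0

/-- Rényi entropy of order `α` of `P` on `{1,…,n}` (Shannon entropy for `α = 1`);
natural logarithms. -/
noncomputable def renyiH (n : ℕ) (α : ℝ) (P : ℕ → ℝ) : ℝ :=
  if α = 1 then -∑ i ∈ Finset.Icc 1 n, P i * Real.log (P i)
  else (1 - α)⁻¹ * Real.log (∑ i ∈ Finset.Icc 1 n, P i ^ α)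

/-- `c_α^{(n)}(ρ) = log n − min_{P ∈ 𝒫_n(ρ)} H_α(P)` for `n ≥ 2`, and `0` for `n ≤ 1`. -/
noncomputable def cN (α ρ : ℝ) (n : ℕ) : ℝ :=
  if n ≤ 1 then 0
  else Real.log n - sInf (renyiH n α '' {P | IsPMF n P ∧ RatioBdd n ρ P})

/-- The closed-form expression for `c_α^{(∞)}(ρ)`, `α ∈ (0,1) ∪ (1,∞)`. -/
noncomputable def cInfinity (α ρ : ℝ) : ℝ :=
  (α - 1)⁻¹ * Real.log (1 + (1 + α * (ρ - 1) - ρ ^ α) / ((1 - α) * (ρ - 1)))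
    - α / (α - 1) * Real.log (1 + (1 + α * (ρ - 1) - ρ ^ α) / ((1 - α) * (ρ ^ α - 1)))

/-- `v(α) := c_α^{(∞)}(2)`, with the continuous extension at `α = 1`. -/
noncomputable def vFun (α : ℝ) : ℝ :=
  if α = 1 then Real.log (2 / (Real.exp 1 * Real.log 2))
  else Real.log ((α - 1) / ((2 : ℝ) ^ α - 2)) - α / (α - 1) * Real.log (α / ((2 : ℝ) ^ α - 1))

/-- `n*`: the maximal `i ∈ {1,…,m−1}` with `P i ≥ (m−i)⁻¹ ∑_{j=i+1}^n P j`. -/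
noncomputable def nStar (n m : ℕ) (P : ℕ → ℝ) : ℕ :=
  sSup {i : ℕ | 1 ≤ i ∧ i ≤ m - 1 ∧
    ((m : ℝ) - (i : ℝ))⁻¹ * ∑ j ∈ Finset.Icc (i + 1) n, P j ≤ P i}

/-- The pmf of `X̃_m` on `{1,…,m}`, built from a nonincreasing pmf `P` on `{1,…,n}`. -/
noncomputable def tildeX (n m : ℕ) (P : ℕ → ℝ) : ℕ → ℝ := fun i =>
  if P 1 < 1 / (m : ℝ) then 1 / (m : ℝ)
  else if i ≤ nStar n m P then P i
  else ((m : ℝ) - (nStar n m P : ℝ))⁻¹ * ∑ j ∈ Finset.Icc (nStar n m P + 1) n, P j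

/-- The pmf of `Ỹ_m` on `{1,…,m}`. -/
def tildeY (n m : ℕ) (P : ℕ → ℝ) : ℕ → ℝ := fun i =>
  if i = 1 then ∑ j ∈ Finset.Icc 1 (n - m + 1), P j else P (n - m + i)

/-- The pmf of `f(X)`: `(push n f P) j = ∑_{i ∈ {1,…,n}, f i = j} P i`. -/
def push (n : ℕ) (f : ℕ → ℕ) (P : ℕ → ℝ) : ℕ → ℝ := fun j =>
  ∑ i ∈ (Finset.Icc 1 n).filter (fun i => f i = j), P i

/-- The set `{1,…,n}^k` of source sequences of length `k`. -/
def seqSet (n k : ℕ) : Finset (Fin k → ℕ) := Fintype.piFinset fun _ => Finset.Icc 1 n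

/-- Product (i.i.d.) probability of a sequence. -/
def prodP (k : ℕ) (P : ℕ → ℝ) (x : Fin k → ℕ) : ℝ := ∏ i, P (x i)

/-- `g` is a ranking function for the i.i.d. vector on `{1,…,n}^k` with marginal `P`:
a bijection onto `{1,…,n^k}` which assigns smaller ranks to larger masses. -/
def IsRanking (n k : ℕ) (P : ℕ → ℝ) (g : (Fin k → ℕ) → ℕ) : Prop :=
  Set.BijOn g (↑(seqSet n k)) (Set.Icc 1 (n ^ k)) ∧
    ∀ x ∈ seqSet n k, ∀ y ∈ seqSet n k, prodP k P y < prodP k P x → g x < g y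

/-- The `ρ`-th guessing moment `E[g(Z^k)^ρ]`. -/
noncomputable def gmoment (n k : ℕ) (P : ℕ → ℝ) (g : (Fin k → ℕ) → ℕ) (ρ : ℝ) : ℝ :=
  ∑ x ∈ seqSet n k, prodP k P x * (g x : ℝ) ^ ρ

/-- Kraft inequality for a `D`-ary length function on `{1,…,n}^k`. -/
def Kraft (n k D : ℕ) (ℓ : (Fin k → ℕ) → ℕ) : Prop :=
  ∑ x ∈ seqSet n k, (D : ℝ) ^ (-(ℓ x : ℝ)) ≤ 1

/-- Scaled cumulant generating function `Λ_k(ρ)` of the codeword lengths (base-`D` log). -/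
noncomputable def cgf (n k D : ℕ) (P : ℕ → ℝ) (ℓ : (Fin k → ℕ) → ℕ) (ρ : ℝ) : ℝ :=
  (1 / (k : ℝ)) * Real.logb D (∑ x ∈ seqSet n k, prodP k P x * (D : ℝ) ^ (ρ * (ℓ x : ℝ)))

/-- `i_β` of Lemma 2. -/
noncomputable def iBeta (n : ℕ) (ρ β : ℝ) : ℕ := Nat.floor ((1 - (n : ℝ) * β) / ((ρ - 1) * β))

/-- The pmf `Q_β` of Lemma 2. -/
noncomputable def Qbeta (n : ℕ) (ρ β : ℝ) : ℕ → ℝ := fun j =>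
  if j ≤ iBeta n ρ β then ρ * β
  else if j = iBeta n ρ β + 1 then
    1 - ((n : ℝ) + (iBeta n ρ β : ℝ) * ρ - (iBeta n ρ β : ℝ) - 1) * β
  else β


lemma aux_g_le {α u : ℝ} (hα : 1 < α) (hu : 0 < u) :
    u ^ (α - 1) * (α - (α - 1) * u) ≤ 1 := by
  rcases le_or_gt (α - (α - 1) * u) 0 with h | h
  · have h1 : (0:ℝ) ≤ u ^ (α - 1) := Real.rpow_nonneg hu.le _
    nlinarith
  · have h1 : Real.log u ≤ u - 1 := Real.log_le_sub_one_of_pos hu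
    have h2 : Real.log (α - (α - 1) * u) ≤ α - (α - 1) * u - 1 :=
      Real.log_le_sub_one_of_pos h
    have hp : 0 < u ^ (α - 1) * (α - (α - 1) * u) :=
      mul_pos (Real.rpow_pos_of_pos hu _) h
    rw [← Real.log_nonpos_iff hp.le]
    rw [Real.log_mul (Real.rpow_pos_of_pos hu _).ne' h.ne', Real.log_rpow hu]
    nlinarith [mul_le_mul_of_nonneg_left h1 (by linarith : (0:ℝ) ≤ α - 1)]

lemma aux_g_ge {α u : ℝ} (hα0 : 0 < α) (hα : α < 1) (hu : 0 < u) :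
    1 ≤ u ^ (α - 1) * (α - (α - 1) * u) := by
  have hb : (1 + (u - 1)) ^ (1 - α) ≤ 1 + (1 - α) * (u - 1) :=
    rpow_one_add_le_one_add_mul_self (by linarith) (by linarith) (by linarith)
  have hb' : u ^ (1 - α) ≤ α - (α - 1) * u := by
    have : (1:ℝ) + (u - 1) = u := by ring
    rw [this] at hb; linarith
  have h1 : u ^ (α - 1) * u ^ (1 - α) ≤ u ^ (α - 1) * (α - (α - 1) * u) :=
    mul_le_mul_of_nonneg_left hb' (Real.rpow_nonneg hu.le _)
  calc (1:ℝ) = u ^ ((α - 1) + (1 - α)) := by norm_num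
    _ = u ^ (α - 1) * u ^ (1 - α) := Real.rpow_add hu _ _
    _ ≤ _ := h1

lemma aux_K_eq {α : ℝ} (hα0 : 0 < α) (hne : α ≠ 1)
    (hr : 0 < (α - 1) / ((2:ℝ) ^ α - 2)) (hc1 : 0 < (2:ℝ) ^ α - 1) :
    Real.exp ((α - 1) * vFun α)
      = ((2:ℝ) ^ α - 1) / α *
        ((α - 1) / ((2:ℝ) ^ α - 2) * (((2:ℝ) ^ α - 1) / α)) ^ (α - 1) := by
  set r := (α - 1) / ((2:ℝ) ^ α - 2) with hrdef
  set s := ((2:ℝ) ^ α - 1) / α with hsdef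
  have hs : 0 < s := div_pos hc1 hα0
  have hsinv : α / ((2:ℝ) ^ α - 1) = s⁻¹ := by
    rw [hsdef, inv_div]
  have hα1 : α - 1 ≠ 0 := sub_ne_zero.mpr hne
  have hv : (α - 1) * vFun α = (α - 1) * Real.log r + α * Real.log s := by
    rw [vFun, if_neg hne, hsinv, Real.log_inv]
    field_simp
    ring
  rw [hv]
  have h1 : (α - 1) * Real.log r + α * Real.log s
      = Real.log r * (α - 1) + Real.log s * (α - 1) + Real.log s := by ring
  rw [h1, Real.exp_add, Real.exp_add, ← Real.rpow_def_of_pos hr, ← Real.rpow_def_of_pos hs,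
    Real.exp_log hs, Real.mul_rpow hr.le hs.le]
  ring

lemma aux_key_core {α τ : ℝ} (hα0 : 0 < α) (hne : α ≠ 1) (hτ : 0 < τ)
    (hr : 0 < (α - 1) / ((2:ℝ) ^ α - 2)) (hc1 : 0 < (2:ℝ) ^ α - 1)
    (hc2 : (2:ℝ) ^ α - 2 ≠ 0) :
    ((2:ℝ) ^ α - 1) * τ ^ (α - 1) - ((2:ℝ) ^ α - 2) * τ ^ α
      = Real.exp ((α - 1) * vFun α) *
        ((τ / ((α - 1) / ((2:ℝ) ^ α - 2) * (((2:ℝ) ^ α - 1) / α))) ^ (α - 1) *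
          (α - (α - 1) * (τ / ((α - 1) / ((2:ℝ) ^ α - 2) * (((2:ℝ) ^ α - 1) / α))))) := by
  set r := (α - 1) / ((2:ℝ) ^ α - 2) with hrdef
  set s := ((2:ℝ) ^ α - 1) / α with hsdef
  have hs : 0 < s := div_pos hc1 hα0
  have hts : 0 < r * s := mul_pos hr hs
  set u := τ / (r * s) with hudef
  have hu : 0 < u := div_pos hτ hts
  have hτeq : τ = (r * s) * u := by
    rw [hudef]; field_simp
  rw [aux_K_eq hα0 hne hr hc1]

  have e1 : τ ^ (α - 1) = (r * s) ^ (α - 1) * u ^ (α - 1) := by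
    rw [hτeq, Real.mul_rpow hts.le hu.le]
  have e2 : τ ^ α = ((r * s) ^ (α - 1) * (r * s)) * (u ^ (α - 1) * u) := by
    rw [hτeq, Real.mul_rpow hts.le hu.le]
    rw [show α = (α - 1) + 1 by ring, Real.rpow_add_one hts.ne', Real.rpow_add_one hu.ne']
    ring
  rw [e1, e2]
  have hc1s : (2:ℝ) ^ α - 1 = α * s := by rw [hsdef]; field_simp
  have hc2rs : ((2:ℝ) ^ α - 2) * (r * s) = (α - 1) * s := by
    rw [hrdef]; field_simp
  linear_combination ((r * s) ^ (α - 1) * u ^ (α - 1)) * hc1s -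
    ((r * s) ^ (α - 1) * (u ^ (α - 1) * u)) * hc2rs

lemma two_rpow_gt {α : ℝ} (hα : 1 < α) : (2:ℝ) < (2:ℝ) ^ α := by
  calc (2:ℝ) = (2:ℝ) ^ (1:ℝ) := (Real.rpow_one 2).symm
    _ < (2:ℝ) ^ α := by
        exact Real.rpow_lt_rpow_of_exponent_lt one_lt_two hα

lemma two_rpow_lt {α : ℝ} (hα : α < 1) : (2:ℝ) ^ α < 2 := by
  calc (2:ℝ) ^ α < (2:ℝ) ^ (1:ℝ) := Real.rpow_lt_rpow_of_exponent_lt one_lt_two hα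
    _ = 2 := Real.rpow_one 2

lemma two_rpow_gt_one {α : ℝ} (hα : 0 < α) : (1:ℝ) < (2:ℝ) ^ α :=
  Real.one_lt_rpow_iff_of_pos two_pos |>.mpr (Or.inl ⟨one_lt_two, hα⟩)

lemma aux_key_gt {α τ : ℝ} (hα : 1 < α) (hτ : 0 < τ) :
    ((2:ℝ) ^ α - 1) * τ ^ (α - 1) - ((2:ℝ) ^ α - 2) * τ ^ α
      ≤ Real.exp ((α - 1) * vFun α) := by
  have h2 := two_rpow_gt hα
  have hr : 0 < (α - 1) / ((2:ℝ) ^ α - 2) := by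
    apply div_pos <;> linarith
  have hc1 : 0 < (2:ℝ) ^ α - 1 := by linarith
  rw [aux_key_core (by linarith) (by linarith) hτ hr hc1 (by linarith)]
  have hg := aux_g_le (u := τ / ((α - 1) / ((2:ℝ) ^ α - 2) * (((2:ℝ) ^ α - 1) / α))) hα
    (div_pos hτ (mul_pos hr (div_pos hc1 (by linarith))))
  nlinarith [Real.exp_pos ((α - 1) * vFun α)]

lemma aux_key_lt {α τ : ℝ} (hα0 : 0 < α) (hα : α < 1) (hτ : 0 < τ) :
    Real.exp ((α - 1) * vFun α)
      ≤ ((2:ℝ) ^ α - 1) * τ ^ (α - 1) - ((2:ℝ) ^ α - 2) * τ ^ α := by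
  have h2 := two_rpow_lt hα
  have h1 := two_rpow_gt_one hα0
  have hr : 0 < (α - 1) / ((2:ℝ) ^ α - 2) := div_pos_of_neg_of_neg (by linarith) (by linarith)
  have hc1 : 0 < (2:ℝ) ^ α - 1 := by linarith
  rw [aux_key_core hα0 (by linarith) hτ hr hc1 (by linarith)]
  have hg := aux_g_ge (u := τ / ((α - 1) / ((2:ℝ) ^ α - 2) * (((2:ℝ) ^ α - 1) / α))) hα0 hα
    (div_pos hτ (mul_pos hr (div_pos hc1 hα0)))
  nlinarith [Real.exp_pos ((α - 1) * vFun α)]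

lemma aux_K_ge_one {α : ℝ} (hα : 1 < α) : 1 ≤ Real.exp ((α - 1) * vFun α) := by
  have h := aux_key_gt hα one_pos
  rw [Real.one_rpow, Real.one_rpow] at h
  linarith

lemma aux_K_le_one {α : ℝ} (hα0 : 0 < α) (hα : α < 1) :
    Real.exp ((α - 1) * vFun α) ≤ 1 := by
  have h := aux_key_lt hα0 hα one_pos
  rw [Real.one_rpow, Real.one_rpow] at h
  linarith



lemma chord_rpow_le {α b q : ℝ} (hα : 1 ≤ α) (hb : 0 < b) (h1 : b ≤ q) (h2 : q ≤ 2 * b) :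
    q ^ α ≤ (2 - (2:ℝ) ^ α) * b ^ α + (((2:ℝ) ^ α - 1) * (b ^ α / b)) * q := by
  have ha : 0 ≤ (2 * b - q) / b := div_nonneg (by linarith) hb.le
  have hb' : 0 ≤ (q - b) / b := div_nonneg (by linarith) hb.le
  have hab : (2 * b - q) / b + (q - b) / b = 1 := by field_simp; ring
  have hcx := (convexOn_rpow hα).2 (Set.mem_Ici.mpr hb.le)
    (Set.mem_Ici.mpr (by linarith : (0:ℝ) ≤ 2 * b)) ha hb' hab
  simp only [smul_eq_mul] at hcx
  have harg : (2 * b - q) / b * b + (q - b) / b * (2 * b) = q := by field_simp; ring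
  rw [harg] at hcx
  rw [Real.mul_rpow (by norm_num : (0:ℝ) ≤ 2) hb.le] at hcx
  have heq : (2 * b - q) / b * b ^ α + (q - b) / b * ((2:ℝ) ^ α * b ^ α)
      = (2 - (2:ℝ) ^ α) * b ^ α + (((2:ℝ) ^ α - 1) * (b ^ α / b)) * q := by
    field_simp; ring
  rw [heq] at hcx
  exact hcx

lemma chord_rpow_ge {α b q : ℝ} (hα0 : 0 ≤ α) (hα : α ≤ 1) (hb : 0 < b) (h1 : b ≤ q)
    (h2 : q ≤ 2 * b) :
    (2 - (2:ℝ) ^ α) * b ^ α + (((2:ℝ) ^ α - 1) * (b ^ α / b)) * q ≤ q ^ α := by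
  have ha : 0 ≤ (2 * b - q) / b := div_nonneg (by linarith) hb.le
  have hb' : 0 ≤ (q - b) / b := div_nonneg (by linarith) hb.le
  have hab : (2 * b - q) / b + (q - b) / b = 1 := by field_simp; ring
  have hcx := (Real.concaveOn_rpow hα0 hα).2 (Set.mem_Ici.mpr hb.le)
    (Set.mem_Ici.mpr (by linarith : (0:ℝ) ≤ 2 * b)) ha hb' hab
  simp only [smul_eq_mul] at hcx
  have harg : (2 * b - q) / b * b + (q - b) / b * (2 * b) = q := by field_simp; ring
  rw [harg] at hcx
  rw [Real.mul_rpow (by norm_num : (0:ℝ) ≤ 2) hb.le] at hcx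
  have heq : (2 * b - q) / b * b ^ α + (q - b) / b * ((2:ℝ) ^ α * b ^ α)
      = (2 - (2:ℝ) ^ α) * b ^ α + (((2:ℝ) ^ α - 1) * (b ^ α / b)) * q := by
    field_simp; ring
  rw [heq] at hcx
  exact hcx

lemma chord_mul_log {b q : ℝ} (hb : 0 < b) (h1 : b ≤ q) (h2 : q ≤ 2 * b) :
    q * Real.log q ≤ (-(2 * Real.log 2 * b)) + (Real.log b + 2 * Real.log 2) * q := by
  have ha : 0 ≤ (2 * b - q) / b := div_nonneg (by linarith) hb.le
  have hb' : 0 ≤ (q - b) / b := div_nonneg (by linarith) hb.le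
  have hab : (2 * b - q) / b + (q - b) / b = 1 := by field_simp; ring
  have hcx := Real.convexOn_mul_log.2 (Set.mem_Ici.mpr hb.le)
    (Set.mem_Ici.mpr (by linarith : (0:ℝ) ≤ 2 * b)) ha hb' hab
  simp only [smul_eq_mul] at hcx
  have harg : (2 * b - q) / b * b + (q - b) / b * (2 * b) = q := by field_simp; ring
  rw [harg] at hcx
  have hlog2 : Real.log (2 * b) = Real.log 2 + Real.log b := Real.log_mul two_ne_zero hb.ne'
  rw [hlog2] at hcx
  have heq : (2 * b - q) / b * (b * Real.log b) + (q - b) / b * (2 * b * (Real.log 2 + Real.log b))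
      = (-(2 * Real.log 2 * b)) + (Real.log b + 2 * Real.log 2) * q := by
    field_simp; ring
  rw [heq] at hcx
  exact hcx

set_option maxHeartbeats 1000000

theorem stmt16 (m : ℕ) (hm : 2 ≤ m)
    (Q : ℕ → ℝ) (hQ : IsPMF m Q) (hdec : DecOn m Q)
    (i : ℕ) (hi : i ≤ m - 1) (hfac : Q (i + 1) ≤ 2 * Q m)
    (S : ℝ) (hS : S = ∑ j ∈ Finset.Icc (i + 1) m, Q j)
    (Qstar : ℕ → ℝ)
    (hQstar : ∀ j, Qstar j = if j ≤ i then Q j else S / ((m : ℝ) - (i : ℝ))) :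
    ∀ α : ℝ, 0 < α → renyiH m α Qstar - vFun α ≤ renyiH m α Q := by
  obtain ⟨hpos, hsum⟩ := hQ
  intro α hα0
  have him : i < m := by omega
  have hβ : 0 < Q m := hpos m (by simp only [Finset.mem_Icc]; omega)
  have hNr0' : (i:ℝ) < (m:ℝ) := by exact_mod_cast him
  set Nr := (m:ℝ) - (i:ℝ) with hNrdef
  have hNr0 : (0:ℝ) < Nr := by rw [hNrdef]; linarith
  have hcard : ((Finset.Icc (i+1) m).card : ℝ) = Nr := by
    rw [Nat.card_Icc, hNrdef, show m + 1 - (i + 1) = m - i by omega, Nat.cast_sub him.le]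
  have hmem : ∀ j ∈ Finset.Icc (i+1) m, j ∈ Finset.Icc 1 m := by
    intro j hj; simp only [Finset.mem_Icc] at *; omega
  have hmemh : ∀ j ∈ Finset.Icc 1 i, j ∈ Finset.Icc 1 m := by
    intro j hj; simp only [Finset.mem_Icc] at *; omega
  have hlow : ∀ j ∈ Finset.Icc (i+1) m, Q m ≤ Q j := by
    intro j hj
    refine hdec j (hmem j hj) m (by simp only [Finset.mem_Icc]; omega) ?_
    simp only [Finset.mem_Icc] at hj; omega
  have hupp : ∀ j ∈ Finset.Icc (i+1) m, Q j ≤ 2 * Q m := by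
    intro j hj
    refine le_trans (hdec (i+1) (by simp only [Finset.mem_Icc]; omega) j (hmem j hj) ?_) hfac
    simp only [Finset.mem_Icc] at hj; exact hj.1
  have hQpos : ∀ j ∈ Finset.Icc (i+1) m, 0 < Q j := fun j hj => hpos j (hmem j hj)
  have hne : (Finset.Icc (i+1) m).Nonempty := by rw [Finset.nonempty_Icc]; omega
  have hSpos : 0 < S := hS ▸ Finset.sum_pos hQpos hne
  have hNβS : Nr * Q m ≤ S := by
    rw [hS, ← hcard]
    calc ((Finset.Icc (i+1) m).card : ℝ) * Q m = ∑ _j ∈ Finset.Icc (i+1) m, Q m := by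
          rw [Finset.sum_const, nsmul_eq_mul]
      _ ≤ _ := Finset.sum_le_sum hlow
  have hsplit : ∀ F : ℕ → ℝ, ∑ j ∈ Finset.Icc 1 m, F j
      = ∑ j ∈ Finset.Icc 1 i, F j + ∑ j ∈ Finset.Icc (i+1) m, F j := by
    intro F
    rw [show Finset.Icc 1 m = Finset.Ioc 0 m from Finset.Icc_add_one_left_eq_Ioc 0 m,
        show Finset.Icc 1 i = Finset.Ioc 0 i from Finset.Icc_add_one_left_eq_Ioc 0 i,
        show Finset.Icc (i+1) m = Finset.Ioc i m from Finset.Icc_add_one_left_eq_Ioc i m]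
    exact (Finset.sum_Ioc_consecutive F (Nat.zero_le i) him.le).symm
  have hsum_lin : ∀ c d : ℝ, ∑ j ∈ Finset.Icc (i+1) m, (c + d * Q j) = Nr * c + d * S := by
    intro c d
    rw [Finset.sum_add_distrib, Finset.sum_const, nsmul_eq_mul, hcard, ← Finset.mul_sum, ← hS]
  have hQstail : ∀ j ∈ Finset.Icc (i+1) m, Qstar j = S / Nr := by
    intro j hj
    rw [hQstar j, if_neg]
    simp only [Finset.mem_Icc] at hj; omega
  have hQshead : ∀ j ∈ Finset.Icc 1 i, Qstar j = Q j := by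
    intro j hj
    rw [hQstar j, if_pos]
    simp only [Finset.mem_Icc] at hj; omega
  by_cases hα1 : α = 1
  · -- Shannon entropy case
    subst hα1
    simp only [renyiH, eq_self_iff_true, if_true]
    set L := Real.log 2 with hL
    have hL0 : 0 < L := Real.log_pos one_lt_two
    have hv1 : vFun 1 = L - 1 - Real.log L := by
      rw [vFun, if_pos rfl, Real.log_div two_ne_zero (mul_pos (Real.exp_pos 1) hL0).ne',
        Real.log_mul (Real.exp_pos 1).ne' hL0.ne', Real.log_exp, ← hL]
      ring
    have hv1nn : 0 ≤ vFun 1 := by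
      have := Real.log_le_sub_one_of_pos hL0
      rw [hv1]; linarith
    have hS1 : S ≤ 1 := by
      have h0 : 0 ≤ ∑ j ∈ Finset.Icc 1 i, Q j :=
        Finset.sum_nonneg fun j hj => (hpos j (hmemh j hj)).le
      have h1 := hsplit Q
      rw [hsum] at h1
      linarith [hS ▸ h1]
    have hchord : ∀ j ∈ Finset.Icc (i+1) m,
        Q j * Real.log (Q j) ≤ (-(2 * L * Q m)) + (Real.log (Q m) + 2 * L) * Q j := by
      intro j hj
      exact chord_mul_log hβ (hlow j hj) (hupp j hj)
    have htail : ∑ j ∈ Finset.Icc (i+1) m, Q j * Real.log (Q j)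
        ≤ Nr * (-(2 * L * Q m)) + (Real.log (Q m) + 2 * L) * S := by
      rw [← hsum_lin]
      exact Finset.sum_le_sum hchord
    have hkey1 : Real.log (Nr * Q m / S) + (1 - Nr * Q m / S) * (2 * L)
        ≤ L - 1 - Real.log L := by
      have hτ : 0 < Nr * Q m / S := by positivity
      have h1 : Real.log (2 * L * (Nr * Q m / S)) ≤ 2 * L * (Nr * Q m / S) - 1 :=
        Real.log_le_sub_one_of_pos (by positivity)
      have h2 : Real.log (2 * L * (Nr * Q m / S))
          = L + Real.log L + Real.log (Nr * Q m / S) := by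
        rw [Real.log_mul (by positivity) hτ.ne', Real.log_mul two_ne_zero hL0.ne', ← hL]
      nlinarith [h1, h2]
    have hlogsplit : Real.log (Q m) = Real.log (S / Nr) + Real.log (Nr * Q m / S) := by
      rw [← Real.log_mul (by positivity) (by positivity)]
      congr 1
      field_simp
    have hmain : ∑ j ∈ Finset.Icc (i+1) m, Q j * Real.log (Q j)
        ≤ S * Real.log (S / Nr) + vFun 1 := by
      have h3 := mul_le_mul_of_nonneg_left hkey1 hSpos.le
      have h4 : S * (Real.log (Nr * Q m / S) + (1 - Nr * Q m / S) * (2 * L))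
          = S * Real.log (Nr * Q m / S) + (S - Nr * Q m) * (2 * L) := by
        field_simp
      have h5 : S * vFun 1 ≤ vFun 1 := by nlinarith
      have h6 : Nr * (-(2 * L * Q m)) + (Real.log (Q m) + 2 * L) * S
          = S * Real.log (S / Nr) + (S * Real.log (Nr * Q m / S) + (S - Nr * Q m) * (2 * L)) := by
        rw [hlogsplit]; ring
      rw [hv1] at h5
      rw [h4] at h3
      rw [hv1]
      linarith [htail, h6 ▸ htail]
    have hQsum := hsplit (fun j => Q j * Real.log (Q j))
    have hQssum : ∑ j ∈ Finset.Icc 1 m, Qstar j * Real.log (Qstar j)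
        = (∑ j ∈ Finset.Icc 1 i, Q j * Real.log (Q j)) + S * Real.log (S / Nr) := by
      rw [hsplit (fun j => Qstar j * Real.log (Qstar j))]
      congr 1
      · exact Finset.sum_congr rfl fun j hj => by rw [hQshead j hj]
      · rw [Finset.sum_congr rfl fun j hj => by rw [hQstail j hj]]
        rw [Finset.sum_const, nsmul_eq_mul, hcard]
        field_simp
    rw [hQsum, hQssum]
    linarith [hmain]
  · -- Rényi entropy case, α ≠ 1
    simp only [renyiH, if_neg hα1]
    set A := ∑ j ∈ Finset.Icc 1 i, Q j ^ α with hA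
    have hA0 : 0 ≤ A :=
      Finset.sum_nonneg fun j hj => Real.rpow_nonneg (hpos j (hmemh j hj)).le _
    set T := ∑ j ∈ Finset.Icc (i+1) m, Q j ^ α with hT
    have hT0 : 0 < T :=
      Finset.sum_pos (fun j hj => Real.rpow_pos_of_pos (hQpos j hj) _) hne
    set u := Nr * (S / Nr) ^ α with hu
    have hu0 : 0 < u := mul_pos hNr0 (Real.rpow_pos_of_pos (by positivity) _)
    have hQsum : ∑ j ∈ Finset.Icc 1 m, Q j ^ α = A + T := hsplit _
    have hQssum : ∑ j ∈ Finset.Icc 1 m, Qstar j ^ α = A + u := by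
      rw [hsplit (fun j => Qstar j ^ α)]
      congr 1
      · exact Finset.sum_congr rfl fun j hj => by rw [hQshead j hj]
      · rw [Finset.sum_congr rfl fun j hj => by rw [hQstail j hj], Finset.sum_const,
          nsmul_eq_mul, hcard]
    set K := Real.exp ((α - 1) * vFun α) with hK
    have hKpos : 0 < K := Real.exp_pos _
    set τ := Nr * Q m / S with hτdef
    have hτ0 : 0 < τ := by rw [hτdef]; positivity
    clear_value A T u K τ
    have e2 : τ ^ α = Nr ^ α * Q m ^ α / S ^ α := by
      rw [hτdef, Real.div_rpow (by positivity) hSpos.le, Real.mul_rpow hNr0.le hβ.le]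
    have e3 : τ ^ (α - 1) = (Nr ^ α * Q m ^ α / S ^ α) / τ := by
      rw [Real.rpow_sub_one hτ0.ne', e2]
    have hidentity : Nr * ((2 - (2:ℝ) ^ α) * Q m ^ α) + (((2:ℝ) ^ α - 1) * (Q m ^ α / Q m)) * S
        = u * (((2:ℝ) ^ α - 1) * τ ^ (α - 1) - ((2:ℝ) ^ α - 2) * τ ^ α) := by
      rw [e2, e3, hu, Real.div_rpow hSpos.le hNr0.le, hτdef]
      have hNrα : (0:ℝ) < Nr ^ α := Real.rpow_pos_of_pos hNr0 _
      have hSα : (0:ℝ) < S ^ α := Real.rpow_pos_of_pos hSpos _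
      field_simp
      ring
    rw [hQsum, hQssum]
    rcases lt_or_gt_of_ne hα1 with hlt | hgt
    · -- α < 1
      have hchord : ∀ j ∈ Finset.Icc (i+1) m,
          (2 - (2:ℝ) ^ α) * Q m ^ α + (((2:ℝ) ^ α - 1) * (Q m ^ α / Q m)) * Q j ≤ Q j ^ α := by
        intro j hj
        exact chord_rpow_ge hα0.le hlt.le hβ (hlow j hj) (hupp j hj)
      have htail : u * K ≤ T := by
        have h1 : Nr * ((2 - (2:ℝ) ^ α) * Q m ^ α) + (((2:ℝ) ^ α - 1) * (Q m ^ α / Q m)) * S ≤ T := by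
          rw [hT, ← hsum_lin]
          exact Finset.sum_le_sum hchord
        have h2 := aux_key_lt hα0 hlt hτ0
        have h3 := mul_le_mul_of_nonneg_left h2 hu0.le
        rw [← hK] at h3
        rw [hidentity] at h1
        linarith
      have hKle : K ≤ 1 := by rw [hK]; exact aux_K_le_one hα0 hlt
      have hcomb : K * (A + u) ≤ A + T := by nlinarith [htail, mul_le_mul_of_nonneg_right hKle hA0]
      have hlog : (α - 1) * vFun α + Real.log (A + u) ≤ Real.log (A + T) := by
        have := Real.log_le_log (by positivity : (0:ℝ) < K * (A + u)) hcomb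
        rw [Real.log_mul hKpos.ne' (by positivity : (0:ℝ) < A + u).ne', hK, Real.log_exp] at this
        linarith
      have hc : (0:ℝ) < (1 - α)⁻¹ := by
        rw [inv_pos]; linarith
      have hmul := mul_le_mul_of_nonneg_left hlog hc.le
      have hexp : (1 - α)⁻¹ * ((α - 1) * vFun α + Real.log (A + u))
          = (1 - α)⁻¹ * Real.log (A + u) - vFun α := by
        have h1α : (1:ℝ) - α ≠ 0 := by intro h; exact hα1 (by linarith)
        field_simp
        ring
      rw [hexp] at hmul
      linarith
    · -- α > 1
      have hchord : ∀ j ∈ Finset.Icc (i+1) m,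
          Q j ^ α ≤ (2 - (2:ℝ) ^ α) * Q m ^ α + (((2:ℝ) ^ α - 1) * (Q m ^ α / Q m)) * Q j := by
        intro j hj
        exact chord_rpow_le hgt.le hβ (hlow j hj) (hupp j hj)
      have htail : T ≤ u * K := by
        have h1 : T ≤ Nr * ((2 - (2:ℝ) ^ α) * Q m ^ α) + (((2:ℝ) ^ α - 1) * (Q m ^ α / Q m)) * S := by
          rw [hT, ← hsum_lin]
          exact Finset.sum_le_sum hchord
        have h2 := aux_key_gt hgt hτ0
        have h3 := mul_le_mul_of_nonneg_left h2 hu0.le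
        rw [← hK] at h3
        rw [hidentity] at h1
        linarith
      have hKge : 1 ≤ K := by rw [hK]; exact aux_K_ge_one hgt
      have hcomb : A + T ≤ K * (A + u) := by nlinarith [htail, mul_le_mul_of_nonneg_right hKge hA0]
      have hlog : Real.log (A + T) ≤ (α - 1) * vFun α + Real.log (A + u) := by
        have := Real.log_le_log (by positivity : (0:ℝ) < A + T) hcomb
        rw [Real.log_mul hKpos.ne' (by positivity : (0:ℝ) < A + u).ne', hK, Real.log_exp] at this
        linarith
      have hc : (1 - α)⁻¹ < 0 := by
        rw [inv_lt_zero]; linarith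
      have hmul := mul_le_mul_of_nonpos_left hlog hc.le
      have hexp : (1 - α)⁻¹ * ((α - 1) * vFun α + Real.log (A + u))
          = (1 - α)⁻¹ * Real.log (A + u) - vFun α := by
        have h1α : (1:ℝ) - α ≠ 0 := by intro h; exact hα1 (by linarith)
        field_simp
        ring
      rw [hexp] at hmul
      linarith
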